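/- Every tempered distribution on ℝ^n supported at the origin is a finite linear combination of partial derivatives ∂^I δ_0 of the Dirac delta at 0, where I ranges over multi-indices in ℕ^n. -/

import Mathlib

open SchwartzMap

/-- The iterated partial-derivative operator `∂^I` on Schwartz functions on `ℝ^n`,
for a multi-index `I ∈ ℕ^n`. -/
noncomputable def partialMulti (n : ℕ) (I : Fin n → ℕ) :
    𝓢((Fin n → ℝ), ℂ) →L[ℂ] 𝓢((Fin n → ℝ), ℂ) :=
  (List.ofFn fun i : Fin n => (LineDeriv.lineDerivOpCLM ℂ 𝓢((Fin n → ℝ), ℂ) (Pi.single i 1 : Fin n → ℝ)) ^ (I i)).prod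

/-- The tempered distribution `∂^I δ₀ : f ↦ (-1)^{|I|} (∂^I f)(0)` on `ℝ^n`. -/
noncomputable def deltaDeriv (n : ℕ) (I : Fin n → ℕ) : 𝓢((Fin n → ℝ), ℂ) →L[ℂ] ℂ :=
  ((-1 : ℂ) ^ (∑ i, I i)) • ((BoundedContinuousFunction.evalCLM ℂ (0 : Fin n → ℝ)).comp
      (SchwartzMap.toBoundedContinuousFunctionCLM ℂ (Fin n → ℝ) ℂ)).comp (partialMulti n I)

noncomputable def Pd (n : ℕ) (i : Fin n) :
    𝓢((Fin n → ℝ), ℂ) →L[ℂ] 𝓢((Fin n → ℝ), ℂ) :=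
  LineDeriv.lineDerivOpCLM ℂ 𝓢((Fin n → ℝ), ℂ) (Pi.single i 1 : Fin n → ℝ)

section aux
variable {n : ℕ}

lemma fderiv_fderiv_smooth (f : 𝓢((Fin n → ℝ), ℂ)) :
    ContDiff ℝ (⊤ : ℕ∞) (fderiv ℝ (⇑f)) := by
  have := f.smooth ⊤
  exact this.fderiv_right (m := (⊤ : ℕ∞)) (by exact_mod_cast le_refl _)

lemma pderiv_apply_eq (m : Fin n → ℝ) (f : 𝓢((Fin n → ℝ), ℂ)) :
    ⇑(LineDeriv.lineDerivOpCLM ℂ 𝓢((Fin n → ℝ), ℂ) m f) = fun y => fderiv ℝ (⇑f) y m :=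
  funext fun y => SchwartzMap.lineDerivOp_apply_eq_fderiv m f y

lemma pderiv_pderiv_apply (m m' : Fin n → ℝ) (f : 𝓢((Fin n → ℝ), ℂ)) (x : Fin n → ℝ) :
    LineDeriv.lineDerivOpCLM ℂ 𝓢((Fin n → ℝ), ℂ) m (LineDeriv.lineDerivOpCLM ℂ 𝓢((Fin n → ℝ), ℂ) m' f) x
      = fderiv ℝ (fderiv ℝ (⇑f)) x m m' := by
  rw [LineDeriv.lineDerivOpCLM_apply, SchwartzMap.lineDerivOp_apply_eq_fderiv, pderiv_apply_eq]
  have hdiff : DifferentiableAt ℝ (fderiv ℝ (⇑f)) x :=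
    ((fderiv_fderiv_smooth f).differentiable (by simp)).differentiableAt
  have : (fun y => fderiv ℝ (⇑f) y m') =
      (ContinuousLinearMap.apply ℝ ℂ m') ∘ (fderiv ℝ (⇑f)) := rfl
  rw [this, ((ContinuousLinearMap.apply ℝ ℂ m').hasFDerivAt.comp x hdiff.hasFDerivAt).fderiv]
  rfl

lemma pderiv_comm (m m' : Fin n → ℝ) (f : 𝓢((Fin n → ℝ), ℂ)) :
    LineDeriv.lineDerivOpCLM ℂ 𝓢((Fin n → ℝ), ℂ) m (LineDeriv.lineDerivOpCLM ℂ 𝓢((Fin n → ℝ), ℂ) m' f)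
      = LineDeriv.lineDerivOpCLM ℂ 𝓢((Fin n → ℝ), ℂ) m' (LineDeriv.lineDerivOpCLM ℂ 𝓢((Fin n → ℝ), ℂ) m f) := by
  ext x
  rw [pderiv_pderiv_apply, pderiv_pderiv_apply]
  have hdiff : DifferentiableAt ℝ (fderiv ℝ (⇑f)) x :=
    ((fderiv_fderiv_smooth f).differentiable (by simp)).differentiableAt
  exact second_derivative_symmetric (fun y => f.differentiableAt.hasFDerivAt)
    hdiff.hasFDerivAt m m'

lemma Pd_commute (i j : Fin n) : Commute (Pd n i) (Pd n j) := by
  show _ = _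
  ext f x
  show (Pd n i) ((Pd n j) f) x = (Pd n j) ((Pd n i) f) x
  rw [show (Pd n i) ((Pd n j) f) = (Pd n j) ((Pd n i) f) from pderiv_comm _ _ f]

lemma partialMulti_eq_prod (I : Fin n → ℕ) :
    partialMulti n I = ((List.ofFn fun i => List.replicate (I i) i).flatten.map (Pd n)).prod := by
  rw [partialMulti, List.map_flatten, List.map_ofFn, List.prod_flatten, List.map_ofFn]
  have : (fun i : Fin n => (LineDeriv.lineDerivOpCLM ℂ 𝓢((Fin n → ℝ), ℂ) (Pi.single i 1 : Fin n → ℝ)) ^ (I i))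
      = (List.prod ∘ List.map (Pd n) ∘ fun i => List.replicate (I i) i) := by
    funext i
    simp [Function.comp, List.map_replicate, List.prod_replicate, Pd]
  rw [this]

lemma map_prod_eq_partialMulti (l : List (Fin n)) :
    (l.map (Pd n)).prod = partialMulti n (fun i => l.count i) := by
  rw [partialMulti_eq_prod]
  set l' := (List.ofFn fun i => List.replicate (l.count i) i).flatten with hl'
  have hperm : l.Perm l' := by
    rw [List.perm_iff_count]
    intro a
    rw [hl', List.count_flatten, List.map_ofFn]
    have : ∀ i : Fin n, (List.count a ∘ fun i => List.replicate (l.count i) i) i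
        = if a = i then l.count i else 0 := by
      intro i
      rw [Function.comp_apply, List.count_replicate]
      simp only [beq_iff_eq]
      by_cases h : a = i
      · subst h; simp
      · rw [if_neg (fun hh => h hh.symm), if_neg h]
    rw [List.sum_ofFn]
    simp only [this]
    rw [Finset.sum_ite_eq]
    rw [if_pos (Finset.mem_univ a)]
  have hpair : (l.map (Pd n)).Pairwise Commute := by
    apply List.Pairwise.map
    · exact fun a b h => h
    · exact List.pairwise_of_forall_mem_list fun a _ b _ => Pd_commute a b
  exact List.Perm.prod_eq' (hperm.map (Pd n)) hpair
end aux

section aux2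
variable {n : ℕ}

/-- standard basis vector -/
def bvec (n : ℕ) (i : Fin n) : Fin n → ℝ := Pi.single i 1

lemma peel (f : 𝓢((Fin n → ℝ), ℂ)) (v : Fin n → ℝ) (j : ℕ) (w : Fin j → Fin n → ℝ)
    (x : Fin n → ℝ) :
    iteratedFDeriv ℝ j (fderiv ℝ (⇑f)) x w v
      = iteratedFDeriv ℝ j (⇑(LineDeriv.lineDerivOpCLM ℂ 𝓢((Fin n → ℝ), ℂ) v f)) x w := by
  have h2 : ⇑(LineDeriv.lineDerivOpCLM ℂ 𝓢((Fin n → ℝ), ℂ) v f)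
      = (ContinuousLinearMap.apply ℝ ℂ v) ∘ (fderiv ℝ (⇑f)) := by
    rw [pderiv_apply_eq]; rfl
  rw [h2, ContinuousLinearMap.iteratedFDeriv_comp_left _ ((fderiv_fderiv_smooth f).contDiffAt (x := x))
    (by exact_mod_cast le_top)]
  rfl

lemma iteratedFDeriv_list : ∀ (j : ℕ) (f : 𝓢((Fin n → ℝ), ℂ)) (c : Fin j → Fin n)
    (x : Fin n → ℝ),
    iteratedFDeriv ℝ j (⇑f) x (fun a => bvec n (c a))
      = (((List.ofFn c).map (Pd n)).prod f) x := by
  intro j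
  induction j with
  | zero =>
    intro f c x
    rw [iteratedFDeriv_zero_apply]
    simp [List.ofFn_zero]
  | succ j ih =>
    intro f c x
    rw [iteratedFDeriv_succ_apply_right, peel f]
    have h3 : (Fin.init fun a : Fin (j+1) => bvec n (c a))
        = fun a : Fin j => bvec n ((c ∘ Fin.castSucc) a) := rfl
    rw [h3]
    rw [ih (LineDeriv.lineDerivOpCLM ℂ 𝓢((Fin n → ℝ), ℂ) (bvec n (c (Fin.last j))) f) (c ∘ Fin.castSucc) x]
    have h4 : List.ofFn c = (List.ofFn (c ∘ Fin.castSucc)).concat (c (Fin.last j)) :=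
      List.ofFn_succ' c
    rw [h4, List.map_concat, List.prod_concat, ContinuousLinearMap.mul_apply]
    rfl

lemma jets_vanish (k₀ : ℕ) (f : 𝓢((Fin n → ℝ), ℂ))
    (h : ∀ I : Fin n → ℕ, (∀ i, I i ≤ k₀) → (partialMulti n I f) 0 = 0) :
    ∀ j, j ≤ k₀ → iteratedFDeriv ℝ j (⇑f) 0 = 0 := by
  intro j hj
  apply ContinuousMultilinearMap.toMultilinearMap_injective
  apply Module.Basis.ext_multilinear (fun _ => Pi.basisFun ℝ (Fin n))
  intro v
  show iteratedFDeriv ℝ j (⇑f) 0 (fun i => Pi.basisFun ℝ (Fin n) (v i)) = _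
  have hb : (fun i => Pi.basisFun ℝ (Fin n) (v i)) = fun i => bvec n (v i) := by
    funext i
    rw [Pi.basisFun_apply]
    rfl
  rw [hb, iteratedFDeriv_list j f v 0, map_prod_eq_partialMulti]
  have hz : (partialMulti n (fun i => (List.ofFn v).count i) f) 0 = 0 := by
    apply h
    intro i
    calc (List.ofFn v).count i ≤ (List.ofFn v).length := List.count_le_length
    _ = j := List.length_ofFn
    _ ≤ k₀ := hj
  rw [hz]
  rfl
end aux2

section aux3
variable {n : ℕ}

lemma taylor_bound (k₀ : ℕ) (f : 𝓢((Fin n → ℝ), ℂ))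
    (hjets : ∀ j, j ≤ k₀ → iteratedFDeriv ℝ j (⇑f) 0 = 0) :
    ∀ d j, j + d = k₀ + 1 → ∀ x : Fin n → ℝ, ‖x‖ ≤ 1 →
      ‖iteratedFDeriv ℝ j (⇑f) x‖ ≤ (SchwartzMap.seminorm ℂ 0 (k₀+1) f) * ‖x‖ ^ d := by
  intro d
  induction d with
  | zero =>
    intro j hj x _
    have hjk : j = k₀ + 1 := by omega
    subst hjk
    simpa using norm_iteratedFDeriv_le_seminorm ℂ f (k₀+1) x
  | succ d ihd =>
    intro j hj x hx
    have hj' : j ≤ k₀ := by omega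
    have h0 : iteratedFDeriv ℝ j (⇑f) 0 = 0 := hjets j hj'
    set M : ℝ := SchwartzMap.seminorm ℂ 0 (k₀+1) f with hM
    have hseg : ∀ y ∈ segment ℝ (0 : Fin n → ℝ) x, ‖y‖ ≤ ‖x‖ := by
      intro y hy
      have : segment ℝ (0 : Fin n → ℝ) x ⊆ Metric.closedBall 0 ‖x‖ := by
        apply (convex_closedBall (0 : Fin n → ℝ) ‖x‖).segment_subset
        · simp
        · simp [mem_closedBall_zero_iff]
      simpa [mem_closedBall_zero_iff] using this hy
    have key : ‖iteratedFDeriv ℝ j (⇑f) x - iteratedFDeriv ℝ j (⇑f) 0‖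
        ≤ (M * ‖x‖ ^ d) * ‖x - 0‖ := by
      apply Convex.norm_image_sub_le_of_norm_fderiv_le (𝕜 := ℝ)
        (fun y _ => ((f.smooth ⊤).differentiable_iteratedFDeriv
          (by exact_mod_cast ENat.coe_lt_top j)).differentiableAt)
        (fun y hy => ?_) (convex_segment _ _)
        (left_mem_segment ℝ (0 : Fin n → ℝ) x) (right_mem_segment ℝ (0 : Fin n → ℝ) x)
      rw [norm_fderiv_iteratedFDeriv]
      calc ‖iteratedFDeriv ℝ (j+1) (⇑f) y‖ ≤ M * ‖y‖ ^ d :=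
        ihd (j+1) (by omega) y ((hseg y hy).trans hx)
      _ ≤ M * ‖x‖ ^ d := by
        apply mul_le_mul_of_nonneg_left (pow_le_pow_left₀ (norm_nonneg y) (hseg y hy) d)
        exact apply_nonneg _ _
    rw [h0, sub_zero, sub_zero] at key
    calc ‖iteratedFDeriv ℝ j (⇑f) x‖ ≤ (M * ‖x‖ ^ d) * ‖x‖ := key
    _ = M * ‖x‖ ^ (d+1) := by rw [pow_succ, mul_assoc]

lemma exists_cutoff : ∃ (χ : (Fin n → ℝ) → ℝ) (δ R : ℝ), 0 < δ ∧ δ ≤ R ∧ 1 ≤ R ∧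
    ContDiff ℝ (⊤ : ℕ∞) χ ∧ HasCompactSupport χ ∧
    (∀ x : Fin n → ℝ, ‖x‖ ≤ δ → χ x = 1) ∧
    (∀ x : Fin n → ℝ, x ∈ Function.support χ → ‖x‖ ≤ R) := by
  set T := toEuclidean (E := Fin n → ℝ) with hT
  set Tc : (Fin n → ℝ) →L[ℝ] EuclideanSpace ℝ (Fin (Module.finrank ℝ (Fin n → ℝ))) := ↑T
    with hTc
  set Ts : EuclideanSpace ℝ (Fin (Module.finrank ℝ (Fin n → ℝ))) →L[ℝ] (Fin n → ℝ) := ↑T.symm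
    with hTs
  set c : ContDiffBump (T 0) := ⟨1, 2, one_pos, one_lt_two⟩ with hc
  set χ : (Fin n → ℝ) → ℝ := ⇑c ∘ ⇑T with hχ
  set δ : ℝ := (1 + ‖Tc‖)⁻¹ with hδ
  set R : ℝ := 2 * ‖Ts‖ + 1 + δ with hR
  have hTnorm : (0:ℝ) ≤ ‖Tc‖ := norm_nonneg _
  have hδpos : 0 < δ := by rw [hδ]; positivity
  refine ⟨χ, δ, R, hδpos, by rw [hR]; linarith [norm_nonneg Ts],
    by rw [hR]; linarith [norm_nonneg Ts, hδpos.le], ?_, ?_, ?_, ?_⟩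
  · exact c.contDiff.comp T.contDiff
  · apply HasCompactSupport.intro (K := ⇑T.symm '' Metric.closedBall (T 0) 2)
      (isCompact_closedBall _ _ |>.image T.symm.continuous)
    intro x hx
    have : T x ∉ Metric.closedBall (T 0) 2 := by
      intro hmem
      exact hx ⟨T x, hmem, by simp⟩
    have hnb : T x ∉ Metric.ball (T 0) 2 := fun h => this (Metric.ball_subset_closedBall h)
    show c (T x) = 0
    rw [← Function.notMem_support, c.support_eq]
    exact hnb
  · intro x hxδ
    show c (T x) = 1
    apply c.one_of_mem_closedBall
    rw [Metric.mem_closedBall, dist_eq_norm]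
    calc ‖T x - T 0‖ = ‖Tc (x - 0)‖ := by
          rw [hTc, ContinuousLinearEquiv.coe_coe, map_sub]
    _ ≤ ‖Tc‖ * ‖x - 0‖ := Tc.le_opNorm _
    _ ≤ ‖Tc‖ * δ := by
      rw [sub_zero]
      exact mul_le_mul_of_nonneg_left hxδ hTnorm
    _ ≤ 1 := by
      rw [hδ, mul_inv_le_iff₀ (by positivity)]
      linarith
  · intro x hxs
    have hsupp : T x ∈ Function.support (⇑c) := hxs
    rw [c.support_eq, Metric.mem_ball, dist_eq_norm] at hsupp
    calc ‖x‖ = ‖Ts (T x - T 0)‖ := by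
          rw [hTs, ContinuousLinearEquiv.coe_coe, map_sub]
          simp
    _ ≤ ‖Ts‖ * ‖T x - T 0‖ := Ts.le_opNorm _
    _ ≤ ‖Ts‖ * 2 := mul_le_mul_of_nonneg_left hsupp.le (norm_nonneg _)
    _ ≤ R := by rw [hR]; linarith [hδpos.le]
end aux3
section keylemma
open Metric
variable {n : ℕ}

set_option maxHeartbeats 2000000 in
lemma key_vanish (k₀ : ℕ) (η : 𝓢((Fin n → ℝ), ℂ) →L[ℂ] ℂ)
    (hsupp : ∀ f : 𝓢((Fin n → ℝ), ℂ), (0 : Fin n → ℝ) ∉ tsupport f → η f = 0)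
    (s : Finset (ℕ × ℕ)) (C : ℝ) (hC0 : 0 ≤ C)
    (hbound : ∀ g : 𝓢((Fin n → ℝ), ℂ),
      ‖η g‖ ≤ C * (s.sup (schwartzSeminormFamily ℂ (Fin n → ℝ) ℂ)) g)
    (hs : ∀ mj ∈ s, mj.2 ≤ k₀)
    (f : 𝓢((Fin n → ℝ), ℂ))
    (hf : ∀ I : Fin n → ℕ, (∀ i, I i ≤ k₀) → (partialMulti n I f) 0 = 0) :
    η f = 0 := by
  classical
  obtain ⟨χ, δ, R, hδpos, hδR, hR1, hχsm, hχcs, hχone, hχsupp⟩ := exists_cutoff (n := n)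
  have hRpos : (0:ℝ) < R := lt_of_lt_of_le one_pos hR1
  have hjets := jets_vanish k₀ f hf
  set M : ℝ := SchwartzMap.seminorm ℂ 0 (k₀+1) f with hM
  have hM0 : 0 ≤ M := apply_nonneg _ _
  have htay : ∀ j, j ≤ k₀ + 1 → ∀ x : Fin n → ℝ, ‖x‖ ≤ 1 →
      ‖iteratedFDeriv ℝ j (⇑f) x‖ ≤ M * ‖x‖ ^ (k₀ + 1 - j) :=
    fun j hj x hx => taylor_bound k₀ f hjets (k₀+1-j) j (by omega) x hx
  -- bounds on derivatives of χ
  have hbd : ∀ i : ℕ, ∃ B : ℝ, 0 ≤ B ∧ ∀ x, ‖iteratedFDeriv ℝ i χ x‖ ≤ B := by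
    intro i
    obtain ⟨B, hB⟩ := (hχcs.iteratedFDeriv i).exists_bound_of_continuous
      (hχsm.continuous_iteratedFDeriv (by exact_mod_cast le_top))
    exact ⟨B, le_trans (norm_nonneg _) (hB 0), hB⟩
  choose B hB0 hBle using hbd
  have hrange : (Finset.range (k₀+1)).Nonempty := Finset.nonempty_range_iff.mpr (by omega)
  set B₀ : ℝ := (Finset.range (k₀+1)).sup' hrange B with hB₀def
  have hB₀ : ∀ i, i ≤ k₀ → B i ≤ B₀ :=
    fun i hi => Finset.le_sup' B (Finset.mem_range.mpr (by omega))
  have hB₀0 : 0 ≤ B₀ := le_trans (hB0 0) (hB₀ 0 (by omega))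
  set K : ℝ := C * ((2:ℝ)^k₀ * B₀ * M * R^(k₀+1)) with hK
  -- main estimate for each ε
  have hepsbound : ∀ ε : ℝ, 0 < ε → ε ≤ R⁻¹ → ‖η f‖ ≤ K * ε := by
    intro ε hε hεR
    have hε1 : ε ≤ 1 := le_trans hεR (inv_le_one_of_one_le₀ hR1)
    set Lε : (Fin n → ℝ) →L[ℝ] (Fin n → ℝ) := ε⁻¹ • ContinuousLinearMap.id ℝ _ with hLε
    have hLεapp : ∀ x : Fin n → ℝ, Lε x = ε⁻¹ • x := fun x => rfl
    have hLεnorm : ‖Lε‖ ≤ ε⁻¹ := by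
      rw [hLε]
      calc ‖ε⁻¹ • ContinuousLinearMap.id ℝ (Fin n → ℝ)‖
          ≤ ‖ε⁻¹‖ * ‖ContinuousLinearMap.id ℝ (Fin n → ℝ)‖ :=
            ContinuousLinearMap.opNorm_smul_le _ _
      _ ≤ ‖ε⁻¹‖ * 1 := by
          apply mul_le_mul_of_nonneg_left ContinuousLinearMap.norm_id_le (norm_nonneg _)
      _ = ε⁻¹ := by rw [mul_one, Real.norm_eq_abs, abs_of_pos (by positivity)]
    have hnormLx : ∀ x : Fin n → ℝ, ‖Lε x‖ = ε⁻¹ * ‖x‖ := by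
      intro x
      rw [hLεapp, norm_smul, Real.norm_eq_abs, abs_of_pos (by positivity)]
    have hχεsm : ContDiff ℝ (⊤ : ℕ∞) (χ ∘ ⇑Lε) := hχsm.comp Lε.contDiff
    -- derivative bounds for the scaled cutoff
    have hχεbd : ∀ (i : ℕ) (x : Fin n → ℝ),
        ‖iteratedFDeriv ℝ i (χ ∘ ⇑Lε) x‖ ≤ B i * (ε⁻¹)^i := by
      intro i x
      rw [ContinuousLinearMap.iteratedFDeriv_comp_right Lε hχsm x (by exact_mod_cast le_top)]
      calc ‖(iteratedFDeriv ℝ i χ (Lε x)).compContinuousLinearMap fun _ => Lε‖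
          ≤ ‖iteratedFDeriv ℝ i χ (Lε x)‖ * ∏ _j : Fin i, ‖Lε‖ :=
            ContinuousMultilinearMap.norm_compContinuousLinearMap_le _ _
      _ ≤ B i * (ε⁻¹)^i := by
          apply mul_le_mul (hBle i _)
          · rw [Finset.prod_const]
            simp only [Finset.card_univ, Fintype.card_fin]
            exact pow_le_pow_left₀ (norm_nonneg _) hLεnorm i
          · positivity
          · exact hB0 i
    -- temperate growth
    have htemp : (χ ∘ ⇑Lε).HasTemperateGrowth := by
      refine ⟨hχεsm, fun N => ⟨0, B N * (ε⁻¹)^N, fun x => ?_⟩⟩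
      simpa using hχεbd N x
    set gε : 𝓢((Fin n → ℝ), ℂ) :=
      SchwartzMap.bilinLeftCLM
        ((ContinuousLinearMap.lsmul ℝ ℝ : ℝ →L[ℝ] ℂ →L[ℝ] ℂ).flip) htemp f with hgε
    have hgapp : ∀ x, gε x = χ (Lε x) • f x := fun x => rfl
    -- η f = η gε
    have hηeq : η f = η gε := by
      have h0 : η (f - gε) = 0 := by
        apply hsupp
        have hsub : tsupport (⇑(f - gε)) ⊆ {x : Fin n → ℝ | ε * δ ≤ ‖x‖} := by
          apply closure_minimal
          · intro x hx
            by_contra hc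
            simp only [Set.mem_setOf_eq, not_le] at hc
            apply hx
            have hone : χ (Lε x) = 1 := by
              apply hχone
              rw [hnormLx]
              rw [inv_mul_le_iff₀ hε]
              exact hc.le
            show f x - gε x = 0
            rw [hgapp, hone, one_smul, sub_self]
          · exact isClosed_le continuous_const continuous_norm
        intro h0mem
        have := hsub h0mem
        simp only [Set.mem_setOf_eq, norm_zero] at this
        nlinarith
      have := map_sub η f gε
      rw [h0] at this
      exact sub_eq_zero.mp this.symm
    -- the support of gε
    have hgsupp : tsupport (⇑gε) ⊆ closedBall (0 : Fin n → ℝ) (R * ε) := by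
      apply closure_minimal
      · intro x hx
        have hχne : χ (Lε x) ≠ 0 := by
          intro hzero
          apply hx
          rw [hgapp, hzero, zero_smul]
        have := hχsupp (Lε x) hχne
        rw [hnormLx, inv_mul_le_iff₀ hε] at this
        rw [mem_closedBall_zero_iff]
        calc ‖x‖ ≤ ε * R := this
        _ = R * ε := mul_comm _ _
      · exact Metric.isClosed_closedBall
    -- seminorm bound
    have hsem : ∀ mj ∈ s, (schwartzSeminormFamily ℂ (Fin n → ℝ) ℂ) mj gε
        ≤ ((2:ℝ)^k₀ * B₀ * M * R^(k₀+1)) * ε := by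
      intro mj hmj
      have hj : mj.2 ≤ k₀ := hs mj hmj
      show SchwartzMap.seminorm ℂ mj.1 mj.2 gε ≤ _
      apply SchwartzMap.seminorm_le_bound ℂ mj.1 mj.2 gε (by positivity)
      intro x
      by_cases hx : ‖x‖ ≤ R * ε
      · -- main case
        have hx1 : ‖x‖ ≤ 1 := by
          calc ‖x‖ ≤ R * ε := hx
          _ ≤ R * R⁻¹ := mul_le_mul_of_nonneg_left hεR hRpos.le
          _ = 1 := mul_inv_cancel₀ hRpos.ne'
        have hxm : ‖x‖ ^ mj.1 ≤ 1 := pow_le_one₀ (norm_nonneg x) hx1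
        have hgfun : ⇑gε = fun y => (χ ∘ ⇑Lε) y • (⇑f) y := funext fun y => hgapp y
        have hleib : ‖iteratedFDeriv ℝ mj.2 (⇑gε) x‖ ≤ ∑ i ∈ Finset.range (mj.2 + 1),
            (mj.2.choose i : ℝ) * ‖iteratedFDeriv ℝ i (χ ∘ ⇑Lε) x‖ *
              ‖iteratedFDeriv ℝ (mj.2 - i) (⇑f) x‖ := by
          rw [hgfun]
          exact norm_iteratedFDeriv_smul_le hχεsm (f.smooth ⊤) x (by exact_mod_cast le_top)
        have hterm : ∀ i ∈ Finset.range (mj.2 + 1),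
            (mj.2.choose i : ℝ) * ‖iteratedFDeriv ℝ i (χ ∘ ⇑Lε) x‖ *
              ‖iteratedFDeriv ℝ (mj.2 - i) (⇑f) x‖
            ≤ (mj.2.choose i : ℝ) * (B₀ * M * R^(k₀+1) * ε) := by
          intro i hi
          rw [Finset.mem_range] at hi
          have hik : i ≤ mj.2 := by omega
          set p : ℕ := k₀ + 1 - (mj.2 - i) with hp
          have hfb : ‖iteratedFDeriv ℝ (mj.2 - i) (⇑f) x‖ ≤ M * (R * ε)^p := by
            calc ‖iteratedFDeriv ℝ (mj.2 - i) (⇑f) x‖ ≤ M * ‖x‖ ^ p :=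
              htay (mj.2 - i) (by omega) x hx1
            _ ≤ M * (R * ε)^p := by
              apply mul_le_mul_of_nonneg_left (pow_le_pow_left₀ (norm_nonneg x) hx p) hM0
          have hcb : ‖iteratedFDeriv ℝ i (χ ∘ ⇑Lε) x‖ ≤ B₀ * (ε⁻¹)^i := by
            calc ‖iteratedFDeriv ℝ i (χ ∘ ⇑Lε) x‖ ≤ B i * (ε⁻¹)^i := hχεbd i x
            _ ≤ B₀ * (ε⁻¹)^i := by
              apply mul_le_mul_of_nonneg_right (hB₀ i (by omega)) (by positivity)
          calc (mj.2.choose i : ℝ) * ‖iteratedFDeriv ℝ i (χ ∘ ⇑Lε) x‖ *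
              ‖iteratedFDeriv ℝ (mj.2 - i) (⇑f) x‖
              ≤ (mj.2.choose i : ℝ) * (B₀ * (ε⁻¹)^i) * (M * (R * ε)^p) := by
                apply mul_le_mul
                · exact mul_le_mul_of_nonneg_left hcb (by positivity)
                · exact hfb
                · positivity
                · positivity
          _ = (mj.2.choose i : ℝ) * (B₀ * M * R^p * ((ε⁻¹)^i * ε^p)) := by
                rw [mul_pow]; ring
          _ ≤ (mj.2.choose i : ℝ) * (B₀ * M * R^(k₀+1) * ε) := by
                apply mul_le_mul_of_nonneg_left _ (by positivity)
                have hεp : (ε⁻¹)^i * ε^p = ε^(k₀ + 1 - mj.2) := by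
                  have hpi : p = (k₀ + 1 - mj.2) + i := by omega
                  rw [hpi, pow_add, ← mul_assoc, mul_comm ((ε⁻¹)^i) _, mul_assoc,
                    ← mul_pow, inv_mul_cancel₀ hε.ne', one_pow, mul_one]
                rw [hεp]
                have h1 : R^p ≤ R^(k₀+1) := pow_le_pow_right₀ hR1 (by omega)
                have h2 : ε^(k₀ + 1 - mj.2) ≤ ε :=
                  pow_le_of_le_one hε.le hε1 (by omega)
                calc B₀ * M * R^p * ε^(k₀ + 1 - mj.2)
                    ≤ B₀ * M * R^(k₀+1) * ε^(k₀ + 1 - mj.2) := by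
                      apply mul_le_mul_of_nonneg_right _ (by positivity)
                      apply mul_le_mul_of_nonneg_left h1 (by positivity)
                _ ≤ B₀ * M * R^(k₀+1) * ε := by
                      apply mul_le_mul_of_nonneg_left h2 (by positivity)
        calc ‖x‖ ^ mj.1 * ‖iteratedFDeriv ℝ mj.2 (⇑gε) x‖
            ≤ 1 * ‖iteratedFDeriv ℝ mj.2 (⇑gε) x‖ := by
              apply mul_le_mul_of_nonneg_right hxm (norm_nonneg _)
        _ = ‖iteratedFDeriv ℝ mj.2 (⇑gε) x‖ := one_mul _
        _ ≤ ∑ i ∈ Finset.range (mj.2 + 1), (mj.2.choose i : ℝ) *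
              ‖iteratedFDeriv ℝ i (χ ∘ ⇑Lε) x‖ * ‖iteratedFDeriv ℝ (mj.2 - i) (⇑f) x‖ := hleib
        _ ≤ ∑ i ∈ Finset.range (mj.2 + 1),
              (mj.2.choose i : ℝ) * (B₀ * M * R^(k₀+1) * ε) := Finset.sum_le_sum hterm
        _ = (∑ i ∈ Finset.range (mj.2 + 1), (mj.2.choose i : ℝ)) * (B₀ * M * R^(k₀+1) * ε) :=
              (Finset.sum_mul _ _ _).symm
        _ ≤ (2:ℝ)^k₀ * (B₀ * M * R^(k₀+1) * ε) := by
              apply mul_le_mul_of_nonneg_right _ (by positivity)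
              have : (∑ i ∈ Finset.range (mj.2 + 1), (mj.2.choose i : ℝ)) = (2:ℝ)^mj.2 := by
                rw [← Nat.cast_sum]
                rw [Nat.sum_range_choose]
                push_cast
                ring
              rw [this]
              exact pow_le_pow_right₀ one_le_two hj
        _ = ((2:ℝ)^k₀ * B₀ * M * R^(k₀+1)) * ε := by ring
      · -- outside the support
        push_neg at hx
        have hnot : x ∉ tsupport (⇑gε) := by
          intro hmem
          have := hgsupp hmem
          rw [mem_closedBall_zero_iff] at this
          linarith
        have hzero : iteratedFDeriv ℝ mj.2 (⇑gε) x = 0 := by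
          by_contra hne
          exact hnot (support_iteratedFDeriv_subset mj.2 (Function.mem_support.mpr hne))
        rw [hzero]
        simp only [norm_zero, mul_zero]
        positivity
    -- conclude
    calc ‖η f‖ = ‖η gε‖ := by rw [hηeq]
    _ ≤ C * (s.sup (schwartzSeminormFamily ℂ (Fin n → ℝ) ℂ)) gε := hbound gε
    _ ≤ C * (((2:ℝ)^k₀ * B₀ * M * R^(k₀+1)) * ε) := by
        apply mul_le_mul_of_nonneg_left _ hC0
        exact Seminorm.finset_sup_apply_le (by positivity) hsem
    _ = K * ε := by rw [hK]; ring
  -- let ε → 0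
  have hK0 : 0 ≤ K := by
    have h1 := hepsbound R⁻¹ (by positivity) le_rfl
    nlinarith [norm_nonneg (η f), inv_pos.mpr hRpos]
  have hfinal : ∀ t : ℝ, 0 < t → ‖η f‖ ≤ t := by
    intro t ht
    have hKt : 0 < t / (K + 1) := by positivity
    set ε : ℝ := min R⁻¹ (t / (K + 1)) with hε
    have hεpos : 0 < ε := lt_min (by positivity) hKt
    calc ‖η f‖ ≤ K * ε := hepsbound ε hεpos (min_le_left _ _)
    _ ≤ K * (t / (K + 1)) := mul_le_mul_of_nonneg_left (min_le_right _ _) hK0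
    _ ≤ t := by
        rw [div_eq_mul_inv, ← mul_assoc]
        rw [mul_comm K t, mul_assoc]
        nlinarith [mul_inv_cancel₀ (show K + 1 ≠ 0 by nlinarith), inv_pos.mpr (show (0:ℝ) < K + 1 by nlinarith)]
  have : ‖η f‖ ≤ 0 := by
    by_contra hc
    push_neg at hc
    linarith [hfinal (‖η f‖ / 2) (by linarith)]
  exact norm_le_zero_iff.mp this

end keylemma

/-- Every tempered distribution on `ℝ^n` supported at the origin is a finite linear
combination of the distributions `∂^I δ₀`. -/
theorem stmt2 (n : ℕ) (η : 𝓢((Fin n → ℝ), ℂ) →L[ℂ] ℂ)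
    (hsupp : ∀ f : 𝓢((Fin n → ℝ), ℂ), (0 : Fin n → ℝ) ∉ tsupport f → η f = 0) :
    η ∈ Submodule.span ℂ (Set.range (deltaDeriv n)) := by
  classical
  obtain ⟨s, C, hCne, hble⟩ :=
    Seminorm.bound_of_continuous (schwartz_withSeminorms ℂ (Fin n → ℝ) ℂ)
      ((normSeminorm ℂ ℂ).comp (η : 𝓢((Fin n → ℝ), ℂ) →ₗ[ℂ] ℂ))
      (by
        show Continuous fun g : 𝓢((Fin n → ℝ), ℂ) => ‖η g‖
        exact continuous_norm.comp η.continuous)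
  set k₀ := s.sup (fun mj => mj.2) with hk₀
  have hbound : ∀ g : 𝓢((Fin n → ℝ), ℂ),
      ‖η g‖ ≤ (C:ℝ) * (s.sup (schwartzSeminormFamily ℂ (Fin n → ℝ) ℂ)) g := by
    intro g
    have h := hble g
    simpa [Seminorm.smul_apply, NNReal.smul_def, smul_eq_mul] using h
  have hker : ∀ f : 𝓢((Fin n → ℝ), ℂ),
      (∀ I : Fin n → ℕ, (∀ i, I i ≤ k₀) → deltaDeriv n I f = 0) → η f = 0 := by
    intro f hIf
    apply key_vanish k₀ η hsupp s (C:ℝ) C.coe_nonneg hbound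
      (fun mj hmj => Finset.le_sup (f := fun mj : ℕ × ℕ => mj.2) hmj) f
    intro I hI
    have h1 := hIf I hI
    rw [deltaDeriv] at h1
    simp only [ContinuousLinearMap.smul_apply, ContinuousLinearMap.comp_apply,
      smul_eq_zero] at h1
    rcases h1 with h | h
    · exact absurd h (pow_ne_zero _ (by norm_num))
    · exact h
  set L : (Fin n → Fin (k₀+1)) → (𝓢((Fin n → ℝ), ℂ) →ₗ[ℂ] ℂ) :=
    fun I => (deltaDeriv n (fun i => (I i : ℕ)) : 𝓢((Fin n → ℝ), ℂ) →ₗ[ℂ] ℂ) with hL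
  have hKer : (⨅ I, LinearMap.ker (L I))
      ≤ LinearMap.ker (η : 𝓢((Fin n → ℝ), ℂ) →ₗ[ℂ] ℂ) := by
    intro f hmem
    rw [Submodule.mem_iInf] at hmem
    rw [LinearMap.mem_ker]
    apply hker f
    intro I hI
    have h := hmem (fun i => (⟨I i, by have := hI i; omega⟩ : Fin (k₀+1)))
    rw [LinearMap.mem_ker] at h
    exact h
  have hspan := mem_span_of_iInf_ker_le_ker hKer
  have hsub : Set.range L ⊆ ⇑(ContinuousLinearMap.coeLM ℂ
      (M := 𝓢((Fin n → ℝ), ℂ)) (N₃ := ℂ)) '' (Set.range (deltaDeriv n)) := by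
    rintro - ⟨I, rfl⟩
    exact ⟨deltaDeriv n (fun i => (I i : ℕ)), ⟨_, rfl⟩, rfl⟩
  have hmem2 := Submodule.span_mono (R := ℂ) hsub hspan
  rw [Submodule.span_image] at hmem2
  obtain ⟨y, hy, hyeq⟩ := hmem2
  have hyη : y = η := by
    apply ContinuousLinearMap.coe_injective
    exact hyeq
  rwa [← hyη]
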